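/- Let ν ∈ P₂(ℝ), ε > 0, and suppose u, h : (0,1) → ℝ are increasing and left-continuous with h(s) + εs ∈ u(s) + ε[R_ν⁻(u(s)), R_ν⁺(u(s))] for almost all s ∈ (0,1). Then this inclusion holds for all s ∈ (0,1). -/

import Mathlib

open MeasureTheory Set

noncomputable def Rplus (μ : Measure ℝ) (x : ℝ) : ℝ := (μ (Iic x)).toReal

noncomputable def Rminus (μ : Measure ℝ) (x : ℝ) : ℝ := (μ (Iio x)).toReal

/-- abstract epsilon-of-room lemma -/
lemma le_add_all_pos {a b : ℝ} (hab : ∀ δ : ℝ, 0 < δ → a ≤ b + δ) : a ≤ b := by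
  by_contra hc
  push_neg at hc
  have := hab ((a - b) / 2) (by linarith)
  linarith

/-- From a full-measure subset of `(0,1)` and a set in `𝓝[<] s`, find a good point. -/
lemma exists_good {G : Set ℝ} (hG : volume.restrict (Ioo (0 : ℝ) 1) Gᶜ = 0)
    {s : ℝ} (hs : s ∈ Ioo (0 : ℝ) 1) {S : Set ℝ} (hS : S ∈ nhdsWithin s (Iio s)) :
    ∃ t, t ∈ G ∧ t ∈ S ∧ t ∈ Ioo (0 : ℝ) 1 ∧ t < s := by
  obtain ⟨V, hVo, hsV, hVS⟩ := mem_nhdsWithin.1 hS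
  obtain ⟨η, hη, hball⟩ := Metric.isOpen_iff.1 hVo s hsV
  set a : ℝ := max (s - η) (s / 2) with ha_def
  have ha : a < s := max_lt (by linarith) (by linarith [hs.1])
  have hsubV : Ioo a s ⊆ V := by
    intro t ht
    apply hball
    rw [Metric.mem_ball, Real.dist_eq, abs_lt]
    constructor
    · have : s - η ≤ a := le_max_left _ _
      linarith [ht.1]
    · linarith [ht.2]
  have hsub01 : Ioo a s ⊆ Ioo (0 : ℝ) 1 := by
    intro t ht
    have h2 : s / 2 ≤ a := le_max_right _ _
    exact ⟨by linarith [ht.1, hs.1], lt_trans ht.2 hs.2⟩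
  have hsubS : Ioo a s ⊆ S := fun t ht => hVS ⟨hsubV ht, ht.2⟩
  have hne : ¬ (Ioo a s ⊆ Gᶜ) := by
    intro hc
    have hle : volume.restrict (Ioo (0 : ℝ) 1) (Ioo a s) ≤ 0 := by
      rw [← hG]; exact measure_mono hc
    rw [Measure.restrict_apply measurableSet_Ioo,
      inter_eq_self_of_subset_left hsub01] at hle
    have : volume (Ioo a s) = 0 := le_antisymm hle zero_le
    rw [Real.volume_Ioo] at this
    have : s - a ≤ 0 := by
      by_contra hc'
      push_neg at hc'
      rw [ENNReal.ofReal_eq_zero] at this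
      linarith
    linarith
  obtain ⟨t, htIoo, htG⟩ := not_subset.1 hne
  exact ⟨t, not_not.1 htG, hsubS htIoo, hsub01 htIoo, htIoo.2⟩

/-- For increasing left-continuous `u, h`: the resolvent inclusion holding a.e.
implies it holds everywhere on `(0,1)`. -/
theorem resolvent_inclusion_everywhere (ν : Measure ℝ) [IsProbabilityMeasure ν]
    (ε : ℝ) (hε : 0 < ε) (h u : ℝ → ℝ)
    (hhm : MonotoneOn h (Ioo (0 : ℝ) 1))
    (hum : MonotoneOn u (Ioo (0 : ℝ) 1))
    (hhl : ∀ s ∈ Ioo (0 : ℝ) 1,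
      Filter.Tendsto h (nhdsWithin s (Iio s)) (nhds (h s)))
    (hul : ∀ s ∈ Ioo (0 : ℝ) 1,
      Filter.Tendsto u (nhdsWithin s (Iio s)) (nhds (u s)))
    (hae : ∀ᵐ s ∂(volume.restrict (Ioo (0 : ℝ) 1)),
      h s + ε * s ∈ Icc (u s + ε * Rminus ν (u s)) (u s + ε * Rplus ν (u s))) :
    ∀ s ∈ Ioo (0 : ℝ) 1,
      h s + ε * s ∈ Icc (u s + ε * Rminus ν (u s)) (u s + ε * Rplus ν (u s)) := by
  classical
  set G : Set ℝ :=
    {t | h t + ε * t ∈ Icc (u t + ε * Rminus ν (u t)) (u t + ε * Rplus ν (u t))} with hGdef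
  have hG : volume.restrict (Ioo (0 : ℝ) 1) Gᶜ = 0 := by
    have := ae_iff.1 hae
    simpa [hGdef, compl_setOf] using this
  intro s hs
  constructor
  · -- lower bound
    by_cases hcase : ∃ t, t ∈ G ∧ t ∈ Ioo (0 : ℝ) 1 ∧ t < s ∧ u t = u s
    · obtain ⟨t, htG, htI, hts, hut⟩ := hcase
      have h1 : u t + ε * Rminus ν (u t) ≤ h t + ε * t := htG.1
      have h2 : h t ≤ h s := hhm htI hs hts.le
      have h3 : ε * t ≤ ε * s := by nlinarith
      rw [← hut]
      linarith
    · push_neg at hcase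
      apply le_add_all_pos
      intro δ hδ
      -- measure of Iic (u s - 1/(n+1)) tends to Rminus ν (u s)
      have hmono : Monotone (fun n : ℕ => Iic (u s - 1 / (n + 1))) := by
        intro m n hmn
        apply Iic_subset_Iic.2
        have h1 : (1 : ℝ) / (n + 1) ≤ 1 / (m + 1) := by
          apply one_div_le_one_div_of_le
          · positivity
          · have := (Nat.cast_le (α := ℝ)).2 hmn; linarith
        linarith
      have hU : ⋃ n : ℕ, Iic (u s - 1 / (n + 1)) = Iio (u s) := by
        ext z
        simp only [mem_iUnion, mem_Iic, mem_Iio]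
        constructor
        · rintro ⟨n, hn⟩
          have : (0 : ℝ) < 1 / (n + 1) := by positivity
          linarith
        · intro hz
          obtain ⟨n, hn⟩ := exists_nat_one_div_lt (by linarith : (0 : ℝ) < u s - z)
          exact ⟨n, by linarith⟩
      have htd0 : Filter.Tendsto (fun n : ℕ => ν (Iic (u s - 1 / (n + 1)))) Filter.atTop
          (nhds (ν (Iio (u s)))) := by
        have := tendsto_measure_iUnion_atTop (μ := ν) hmono
        rwa [hU] at this
      have htd : Filter.Tendsto (fun n : ℕ => (ν (Iic (u s - 1 / (n + 1)))).toReal)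
          Filter.atTop (nhds (Rminus ν (u s))) :=
        (ENNReal.tendsto_toReal (measure_ne_top ν _)).comp htd0
      have hpos : (0 : ℝ) < δ / (2 * ε) := by positivity
      have hev : ∀ᶠ n : ℕ in Filter.atTop,
          Rminus ν (u s) - δ / (2 * ε) < (ν (Iic (u s - 1 / (n + 1)))).toReal :=
        htd.eventually (eventually_gt_nhds (by linarith))
      obtain ⟨n, hn⟩ := hev.exists
      set x : ℝ := u s - 1 / (n + 1) with hxdef
      have hx : x < u s := by
        have h0 : (0 : ℝ) < 1 / ((n : ℝ) + 1) := by positivity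
        rw [hxdef]; linarith
      set y : ℝ := max x (u s - δ / 2) with hydef
      have hy : y < u s := max_lt hx (by linarith)
      have huev : ∀ᶠ t in nhdsWithin s (Iio s), y < u t :=
        (hul s hs).eventually (eventually_gt_nhds hy)
      obtain ⟨t, htG, hty0, htI, hts⟩ := exists_good hG hs huev
      have hty : y < u t := hty0
      have hut : u t ≤ u s := hum htI hs hts.le
      have hIic : ν (Iic x) ≤ ν (Iio (u t)) := by
        apply measure_mono
        intro z hz
        exact lt_of_le_of_lt hz (lt_of_le_of_lt (le_max_left _ _) hty)
      have htoReal : (ν (Iic x)).toReal ≤ Rminus ν (u t) :=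
        ENNReal.toReal_mono (measure_ne_top ν _) hIic
      have hlow : u t + ε * Rminus ν (u t) ≤ h t + ε * t := htG.1
      have hht : h t + ε * t ≤ h s + ε * s := by
        have h2 : h t ≤ h s := hhm htI hs hts.le
        nlinarith
      have hut2 : u s - δ / 2 < u t := lt_of_le_of_lt (le_max_right _ _) hty
      have e1 : ε * Rminus ν (u s) ≤ ε * (ν (Iic x)).toReal + δ / 2 := by
        have h' : Rminus ν (u s) ≤ (ν (Iic x)).toReal + δ / (2 * ε) := le_of_lt (by linarith)
        have h'' : ε * Rminus ν (u s) ≤ ε * ((ν (Iic x)).toReal + δ / (2 * ε)) :=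
          mul_le_mul_of_nonneg_left h' hε.le
        have h3 : ε * (δ / (2 * ε)) = δ / 2 := by
          field_simp
        nlinarith [h'']
      have e2 : ε * (ν (Iic x)).toReal ≤ ε * Rminus ν (u t) :=
        mul_le_mul_of_nonneg_left htoReal hε.le
      linarith
  · -- upper bound
    apply le_add_all_pos
    intro δ hδ
    have htd : Filter.Tendsto (fun t => h t + ε * t) (nhdsWithin s (Iio s))
        (nhds (h s + ε * s)) := by
      apply Filter.Tendsto.add (hhl s hs)
      exact ((continuous_const.mul continuous_id).tendsto s).mono_left nhdsWithin_le_nhds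
    have hev : ∀ᶠ t in nhdsWithin s (Iio s), h s + ε * s - δ < h t + ε * t :=
      htd.eventually (eventually_gt_nhds (by linarith))
    obtain ⟨t, htG, hgt, htI, hts⟩ := exists_good hG hs hev
    have hup : h t + ε * t ≤ u t + ε * Rplus ν (u t) := htG.2
    have hut : u t ≤ u s := hum htI hs hts.le
    have hR : Rplus ν (u t) ≤ Rplus ν (u s) :=
      ENNReal.toReal_mono (measure_ne_top ν _) (measure_mono (Iic_subset_Iic.2 hut))
    have hR' : ε * Rplus ν (u t) ≤ ε * Rplus ν (u s) :=
      mul_le_mul_of_nonneg_left hR hε.le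
    have hgt' : h s + ε * s - δ < h t + ε * t := hgt
    linarith
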